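/- For every tree T on n ≥ 2 vertices, pc_opt(T) = n − 2 − α'(T) + Δ(T), where α'(T) is the maximum matching size and Δ(T) is the maximum degree. -/

import Mathlib

open SimpleGraph

/-- A walk is properly colored: no two consecutive edges share a color. -/
def ProperWalk {V : Type*} {G : SimpleGraph V} (c : Sym2 V → ℕ) {u v : V} (p : G.Walk u v) : Prop :=
  (p.edges.map c).Chain' (· ≠ ·)

/-- An edge-colored graph is properly connected. -/
def ProperlyConnected {V : Type*} (G : SimpleGraph V) (c : Sym2 V → ℕ) : Prop :=
  ∀ u v : V, u ≠ v → ∃ p : G.Walk u v, p.IsPath ∧ ProperWalk c p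

/-- Number of edges recolored away from the base color 0. -/
noncomputable def numRecolored {V : Type*} (G : SimpleGraph V) (c : Sym2 V → ℕ) : ℕ :=
  {e | e ∈ G.edgeSet ∧ c e ≠ 0}.ncard

/-- Number of new colors used. -/
noncomputable def numNewColors {V : Type*} (G : SimpleGraph V) (c : Sym2 V → ℕ) : ℕ :=
  (c '' {e | e ∈ G.edgeSet ∧ c e ≠ 0}).ncard

/-- Optimal proper connection number: minimum of p + q. -/
noncomputable def pcOpt {V : Type*} (G : SimpleGraph V) : ℕ :=
  sInf { n | ∃ c : Sym2 V → ℕ, ProperlyConnected G c ∧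
    n = numRecolored G c + numNewColors G c }

/-- Maximum matching size. -/
noncomputable def matchingNum {V : Type*} (G : SimpleGraph V) : ℕ :=
  sSup { n | ∃ M : SimpleGraph.Subgraph G, M.IsMatching ∧ n = M.edgeSet.ncard }

/-- Maximum degree. -/
noncomputable def maxDeg {V : Type*} (G : SimpleGraph V) : ℕ :=
  sSup { d | ∃ v : V, d = (G.neighborSet v).ncard }

set_option linter.unusedSectionVars false

namespace PCAux

variable {V : Type*} [Fintype V]

open Classical in
/-- vertex covered by an edge-set matching -/
def vCov (M : Set (Sym2 V)) (v : V) : Prop := ∃ e ∈ M, v ∈ e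

/-- edge-set matchings -/
def EMatch (F : SimpleGraph V) (M : Set (Sym2 V)) : Prop :=
  M ⊆ F.edgeSet ∧ ∀ e ∈ M, ∀ f ∈ M, e ≠ f → ∀ v : V, v ∈ e → v ∉ f

lemma EMatch.partner_unique {F : SimpleGraph V} {M : Set (Sym2 V)} (h : EMatch F M)
    {v a b : V} (ha : s(v,a) ∈ M) (hb : s(v,b) ∈ M) : a = b := by
  by_contra hab
  have hne : s(v,a) ≠ s(v,b) := fun h' => hab (Sym2.congr_right.mp h')
  exact h.2 _ ha _ hb hne v (Sym2.mem_mk_left v a) (Sym2.mem_mk_left v b)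

lemma ematch_ncard_le {F : SimpleGraph V} {M : Set (Sym2 V)} (h : EMatch F M) :
    M.ncard ≤ matchingNum F := by
  classical
  let N : F.Subgraph := {
    verts := {v | vCov M v}
    Adj := fun u v => s(u,v) ∈ M
    adj_sub := fun hu => (SimpleGraph.mem_edgeSet F).1 (h.1 hu)
    edge_vert := fun hu => ⟨_, hu, Sym2.mem_mk_left _ _⟩
    symm := ⟨fun u v hu => by simpa only [Sym2.eq_swap] using hu⟩ }
  have hNm : N.IsMatching := by
    rintro v ⟨e, he, hv⟩
    obtain ⟨w, rfl⟩ := Sym2.mem_iff_exists.mp hv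
    exact ⟨w, he, fun y hy => h.partner_unique hy he⟩
  have hNe : N.edgeSet = M := by
    ext e
    induction e using Sym2.ind with
    | _ u v => exact SimpleGraph.Subgraph.mem_edgeSet
  have hmem : M.ncard ∈ { n | ∃ M : SimpleGraph.Subgraph F, M.IsMatching ∧ n = M.edgeSet.ncard } :=
    ⟨N, hNm, by rw [hNe]⟩
  refine le_csSup ⟨F.edgeSet.ncard, ?_⟩ hmem
  rintro n ⟨N', _, rfl⟩
  exact Set.ncard_le_ncard N'.edgeSet_subset (Set.toFinite _)

lemma exists_max_ematch (F : SimpleGraph V) :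
    ∃ M : Set (Sym2 V), EMatch F M ∧ M.ncard = matchingNum F := by
  classical
  have hbot : (⊥ : SimpleGraph.Subgraph F).IsMatching := by
    rintro v hv
    simp only [SimpleGraph.Subgraph.verts_bot, Set.mem_empty_iff_false] at hv
  have hne : { n | ∃ M : SimpleGraph.Subgraph F, M.IsMatching ∧ n = M.edgeSet.ncard }.Nonempty :=
    ⟨_, ⊥, hbot, rfl⟩
  have hbdd : BddAbove { n | ∃ M : SimpleGraph.Subgraph F, M.IsMatching ∧ n = M.edgeSet.ncard } := by
    refine ⟨F.edgeSet.ncard, ?_⟩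
    rintro n ⟨N', _, rfl⟩
    exact Set.ncard_le_ncard N'.edgeSet_subset (Set.toFinite _)
  obtain ⟨N, hN, hval⟩ := Nat.sSup_mem hne hbdd
  refine ⟨N.edgeSet, ⟨N.edgeSet_subset, ?_⟩, hval.symm⟩
  intro e he f hf hef v hve hvf
  obtain ⟨a, rfl⟩ := Sym2.mem_iff_exists.mp hve
  obtain ⟨b, rfl⟩ := Sym2.mem_iff_exists.mp hvf
  have hadjA : N.Adj v a := SimpleGraph.Subgraph.mem_edgeSet.mp he
  have hadjB : N.Adj v b := SimpleGraph.Subgraph.mem_edgeSet.mp hf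
  obtain ⟨w, -, huniq⟩ := hN (N.edge_vert hadjA)
  exact hef (by rw [huniq a hadjA, huniq b hadjB])

lemma deg_le_maxDeg (F : SimpleGraph V) (v : V) : (F.neighborSet v).ncard ≤ maxDeg F := by
  refine le_csSup ⟨Fintype.card V, ?_⟩ ⟨v, rfl⟩
  rintro d ⟨w, rfl⟩
  calc (F.neighborSet w).ncard ≤ (Set.univ : Set V).ncard :=
        Set.ncard_le_ncard (Set.subset_univ _) (Set.toFinite _)
    _ = Fintype.card V := by simp [Set.ncard_univ]

lemma exists_maxDeg_vertex (F : SimpleGraph V) [Nonempty V] :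
    ∃ v : V, (F.neighborSet v).ncard = maxDeg F := by
  have hne : { d | ∃ v : V, d = (F.neighborSet v).ncard }.Nonempty :=
    ⟨_, Classical.arbitrary V, rfl⟩
  have hbdd : BddAbove { d | ∃ v : V, d = (F.neighborSet v).ncard } := by
    refine ⟨Fintype.card V, ?_⟩
    rintro d ⟨w, rfl⟩
    calc (F.neighborSet w).ncard ≤ (Set.univ : Set V).ncard :=
          Set.ncard_le_ncard (Set.subset_univ _) (Set.toFinite _)
      _ = Fintype.card V := by simp [Set.ncard_univ]
  obtain ⟨v, hv⟩ := Nat.sSup_mem hne hbdd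
  exact ⟨v, hv.symm⟩

/-- colors of adjacent edges differ, in a properly connected tree -/
lemma tree_adj_colors_ne {T : SimpleGraph V} (hT : T.IsTree) {c : Sym2 V → ℕ}
    (hc : ProperlyConnected T c) {a b d : V} (h1 : T.Adj a b) (h2 : T.Adj b d)
    (had : a ≠ d) : c s(a,b) ≠ c s(b,d) := by
  have hW : (Walk.cons h1 (Walk.cons h2 Walk.nil)).IsPath := by
    simp [Walk.cons_isPath_iff, h1.ne, h2.ne, had]
  obtain ⟨p, hp, hpc⟩ := hc a d had
  have hpW : p = Walk.cons h1 (Walk.cons h2 Walk.nil) :=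
    (hT.existsUnique_path a d).unique hp hW
  subst hpW
  simp only [ProperWalk, List.Chain', Walk.edges_cons, Walk.edges_nil, List.map_cons, List.map_nil,
    List.isChain_cons_cons, List.isChain_singleton, and_true] at hpc
  exact hpc

/-- all edges of a path containing the start vertex are the first edge -/
lemma edges_at_start {F : SimpleGraph V} {x y : V} (p : F.Walk x y) (hp : p.IsPath) :
    ∃ z : V, ∀ e ∈ p.edges, x ∈ e → e = s(x, z) := by
  cases p with
  | nil => exact ⟨x, by simp⟩
  | cons h q =>
    rename_i b
    refine ⟨b, ?_⟩
    intro e he hx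
    rw [Walk.edges_cons, List.mem_cons] at he
    rcases he with rfl | he
    · rfl
    · exfalso
      obtain ⟨z, rfl⟩ := Sym2.mem_iff_exists.mp hx
      have hxs := Walk.fst_mem_support_of_mem_edges q he
      exact (Walk.cons_isPath_iff h q).mp hp |>.2 hxs

lemma edges_at_end {F : SimpleGraph V} {x y : V} (p : F.Walk x y) (hp : p.IsPath) :
    ∃ z : V, ∀ e ∈ p.edges, y ∈ e → e = s(y, z) := by
  obtain ⟨z, hz⟩ := edges_at_start p.reverse hp.reverse
  refine ⟨z, fun e he hy => hz e ?_ hy⟩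
  rw [Walk.edges_reverse, List.mem_reverse]
  exact he

lemma exists_leaf {F : SimpleGraph V} (hF : F.IsAcyclic) (hne : F.edgeSet.Nonempty) :
    ∃ x u : V, F.Adj x u ∧ F.neighborSet x = {u} := by
  classical
  obtain ⟨e, he⟩ := hne
  induction e using Sym2.ind with
  | _ a b =>
  have hab : F.Adj a b := (SimpleGraph.mem_edgeSet F).1 he
  set S : Set ℕ := {n | ∃ (x y : V) (p : F.Walk x y), p.IsPath ∧ p.length = n} with hS
  have h1S : 1 ∈ S := ⟨a, b, Walk.cons hab Walk.nil, by simp [Walk.cons_isPath_iff, hab.ne], rfl⟩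
  have hbdd : BddAbove S := by
    refine ⟨Fintype.card V, ?_⟩
    rintro n ⟨x, y, p, hp, rfl⟩
    exact le_of_lt hp.length_lt
  obtain ⟨x, y, p, hp, hlen⟩ := Nat.sSup_mem ⟨1, h1S⟩ hbdd
  have hmax : ∀ (x' y' : V) (q : F.Walk x' y'), q.IsPath → q.length ≤ sSup S :=
    fun x' y' q hq => le_csSup hbdd ⟨x', y', q, hq, rfl⟩
  have hN1 : 1 ≤ sSup S := le_csSup hbdd h1S
  cases p with
  | nil => rw [← hlen] at hN1; simp at hN1
  | cons hadj q =>
    rename_i b0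
    refine ⟨x, b0, hadj, ?_⟩
    obtain ⟨z, hz⟩ := edges_at_start (Walk.cons hadj q) hp
    have hzb0 : z = b0 := by
      have := hz s(x, b0) (by simp) (Sym2.mem_mk_left _ _)
      exact (Sym2.congr_right.mp this).symm
    ext u'
    simp only [SimpleGraph.mem_neighborSet, Set.mem_singleton_iff]
    constructor
    · intro h'
      by_cases hmem : s(x, u') ∈ (Walk.cons hadj q).edges
      · have := hz _ hmem (Sym2.mem_mk_left _ _)
        rw [hzb0] at this
        exact Sym2.congr_right.mp this
      · exfalso
        by_cases hsup : u' ∈ (Walk.cons hadj q).support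
        · have htk : ((Walk.cons hadj q).takeUntil u' hsup).IsPath := hp.takeUntil hsup
          have hPe : (Walk.cons h' Walk.nil : F.Walk x u').IsPath := by
            simp [Walk.cons_isPath_iff, h'.ne]
          have heq : (Walk.cons hadj q).takeUntil u' hsup = Walk.cons h' Walk.nil :=
            Subtype.ext_iff.mp (hF.path_unique ⟨_, htk⟩ ⟨_, hPe⟩)
          apply hmem
          apply Walk.edges_takeUntil_subset (Walk.cons hadj q) hsup
          rw [heq]
          simp
        · have hp' : (Walk.cons h'.symm (Walk.cons hadj q)).IsPath :=
            (Walk.cons_isPath_iff _ _).2 ⟨hp, hsup⟩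
          have := hmax _ _ _ hp'
          rw [Walk.length_cons, hlen] at this
          omega
    · rintro rfl
      exact hadj


/-- key coloring lemma: any matching whose uncovered vertices have degree < D
extends to a proper D-edge-coloring with color class 0 equal to the matching. -/
lemma colorQ (D : ℕ) : ∀ (k : ℕ) (F : SimpleGraph V), F.IsAcyclic → F.edgeSet.ncard = k →
    (∀ v, (F.neighborSet v).ncard ≤ D) → ∀ (M : Set (Sym2 V)), EMatch F M →
    (∀ v, ¬ vCov M v → (F.neighborSet v).ncard < D) →
    ∃ c : Sym2 V → ℕ, (∀ e ∈ F.edgeSet, c e < D) ∧ {e | e ∈ F.edgeSet ∧ c e = 0} = M ∧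
      (∀ e f, e ∈ F.edgeSet → f ∈ F.edgeSet → e ≠ f → (∃ v : V, v ∈ e ∧ v ∈ f) →
        c e ≠ c f) := by
  classical
  intro k
  induction k using Nat.strong_induction_on with
  | _ k ih =>
  intro F hF hk hdeg M hM hcov
  rcases Set.eq_empty_or_nonempty F.edgeSet with hE | hE
  · have hMe : M = ∅ := Set.eq_empty_of_subset_empty (hE ▸ hM.1)
    refine ⟨fun _ => 1, ?_, ?_, ?_⟩
    · intro e he; rw [hE] at he; simp at he
    · rw [hMe]; ext f; simp [hE]
    · intro e f he; rw [hE] at he; simp at he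
  · obtain ⟨x, u, hxu, hnbr⟩ := exists_leaf hF hE
    set e₀ : Sym2 V := s(x, u) with he₀def
    set F' := F.deleteEdges {e₀} with hF'def
    have hE' : F'.edgeSet = F.edgeSet \ {e₀} := SimpleGraph.edgeSet_deleteEdges _
    have he₀ : e₀ ∈ F.edgeSet := (SimpleGraph.mem_edgeSet F).2 hxu
    have hxne : x ≠ u := hxu.ne
    have hk' : F'.edgeSet.ncard < k := by
      rw [hE', ← hk]
      exact Set.ncard_diff_singleton_lt_of_mem he₀ (Set.toFinite _)
    have hle : F' ≤ F := SimpleGraph.deleteEdges_le _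
    have hF' : F'.IsAcyclic := fun v c hc => hF (c.mapLe hle) (hc.mapLe hle)
    have hmemE' : ∀ f, f ∈ F'.edgeSet ↔ f ∈ F.edgeSet ∧ f ≠ e₀ := by
      intro f; rw [hE']; simp [Set.mem_diff]
    -- neighborhoods
    have hsub : ∀ v, F'.neighborSet v ⊆ F.neighborSet v := fun v w hw => hle hw
    have hnbr' : ∀ v, v ≠ x → v ≠ u → F'.neighborSet v = F.neighborSet v := by
      intro v hvx hvu
      ext w
      simp only [SimpleGraph.mem_neighborSet, hF'def, SimpleGraph.deleteEdges_adj,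
        Set.mem_singleton_iff, and_iff_left_iff_imp]
      intro _ hcontra
      rw [he₀def, Sym2.eq_iff] at hcontra
      rcases hcontra with ⟨rfl, rfl⟩ | ⟨rfl, rfl⟩
      · exact hvx rfl
      · exact hvu rfl
    have hnbrx : F'.neighborSet x = ∅ := by
      ext w
      simp only [SimpleGraph.mem_neighborSet, hF'def, SimpleGraph.deleteEdges_adj,
        Set.mem_singleton_iff, Set.mem_empty_iff_false, iff_false, not_and, not_not]
      intro hadj
      have : w ∈ F.neighborSet x := hadj
      rw [hnbr, Set.mem_singleton_iff] at this
      rw [this]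
    have hnbru : F'.neighborSet u = F.neighborSet u \ {x} := by
      ext w
      simp only [SimpleGraph.mem_neighborSet, hF'def, SimpleGraph.deleteEdges_adj,
        Set.mem_singleton_iff, Set.mem_diff]
      constructor
      · rintro ⟨hadj, hne⟩
        refine ⟨hadj, ?_⟩
        rintro rfl
        exact hne (by rw [he₀def, Sym2.eq_swap])
      · rintro ⟨hadj, hne⟩
        refine ⟨hadj, ?_⟩
        intro hcontra
        rw [he₀def, Sym2.eq_iff] at hcontra
        rcases hcontra with ⟨h1, -⟩ | ⟨-, h2⟩
        · exact hxu.ne h1.symm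
        · exact hne h2
    have hxmem : x ∈ F.neighborSet u := hxu.symm
    have hdegu : (F'.neighborSet u).ncard + 1 = (F.neighborSet u).ncard := by
      rw [hnbru]
      exact Set.ncard_diff_singleton_add_one hxmem (Set.toFinite _)
    have hdegx : (F.neighborSet x).ncard = 1 := by rw [hnbr]; simp
    have hD1 : 1 ≤ D := hdegx ▸ hdeg x
    have hdeg' : ∀ v, (F'.neighborSet v).ncard ≤ D :=
      fun v => le_trans (Set.ncard_le_ncard (hsub v) (Set.toFinite _)) (hdeg v)
    -- x is covered only possibly by e₀
    have hxcov : ∀ f ∈ M, x ∈ f → f = e₀ := by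
      intro f hf hxf
      obtain ⟨z, rfl⟩ := Sym2.mem_iff_exists.mp hxf
      have hz : z ∈ F.neighborSet x := (SimpleGraph.mem_edgeSet F).1 (hM.1 hf)
      rw [hnbr, Set.mem_singleton_iff] at hz
      rw [hz]
    by_cases he₀M : e₀ ∈ M
    · -- case e₀ ∈ M
      set M' := M \ {e₀} with hM'def
      have hM' : EMatch F' M' := by
        constructor
        · intro f hf
          rw [hmemE' f]
          exact ⟨hM.1 hf.1, hf.2⟩
        · intro a ha b hb hab v hva hvb
          exact hM.2 a ha.1 b hb.1 hab v hva hvb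
      have hucovM' : ¬ vCov M' u := by
        rintro ⟨f, hf, huf⟩
        obtain ⟨z, rfl⟩ := Sym2.mem_iff_exists.mp huf
        have he₀' : s(u, x) ∈ M := by rwa [Sym2.eq_swap]
        have hz : z = x := hM.partner_unique hf.1 he₀'
        apply hf.2
        rw [hz]
        exact Set.mem_singleton_iff.mpr Sym2.eq_swap
      have hxcovM' : ¬ vCov M' x := by
        rintro ⟨f, hf, hxf⟩
        exact hf.2 (Set.mem_singleton_iff.mpr (hxcov f hf.1 hxf))
      have hcov' : ∀ v, ¬ vCov M' v → (F'.neighborSet v).ncard < D := by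
        intro v hv
        by_cases hvx : v = x
        · subst hvx; rw [hnbrx]; simpa using (show 0 < D from hD1)
        by_cases hvu : v = u
        · rw [hvu]
          have h1 := hdeg u
          omega
        · rw [hnbr' v hvx hvu]
          apply hcov
          rintro ⟨f, hf, hvf⟩
          by_cases hfe : f = e₀
          · subst hfe
            rw [he₀def, Sym2.mem_iff] at hvf
            rcases hvf with h | h
            · exact hvx h
            · exact hvu h
          · exact hv ⟨f, ⟨hf, by simp [hfe]⟩, hvf⟩
      obtain ⟨c', hc'lt, hc'zero, hc'prop⟩ := ih _ hk' F' hF' rfl hdeg' M' hM' hcov'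
      refine ⟨fun f => if f = e₀ then 0 else c' f, ?_, ?_, ?_⟩
      · intro f hf
        dsimp only
        by_cases hfe : f = e₀
        · rw [if_pos hfe]; exact hD1
        · rw [if_neg hfe]; exact hc'lt f ((hmemE' f).2 ⟨hf, hfe⟩)
      · ext f
        simp only [Set.mem_setOf_eq]
        constructor
        · rintro ⟨hfE, hf0⟩
          by_cases hfe : f = e₀
          · rw [hfe]; exact he₀M
          · rw [if_neg hfe] at hf0
            have hmem : f ∈ M' := by
              rw [← hc'zero]
              exact ⟨(hmemE' f).2 ⟨hfE, hfe⟩, hf0⟩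
            exact hmem.1
        · intro hfM
          refine ⟨hM.1 hfM, ?_⟩
          by_cases hfe : f = e₀
          · rw [if_pos hfe]
          · rw [if_neg hfe]
            have hmem : f ∈ {e | e ∈ F'.edgeSet ∧ c' e = 0} := by
              rw [hc'zero]
              exact ⟨hfM, by simp [hfe]⟩
            exact hmem.2
      · have key : ∀ f, f ∈ F.edgeSet → f ≠ e₀ → (∃ v, v ∈ e₀ ∧ v ∈ f) → c' f ≠ 0 := by
          rintro f hfE hfe ⟨v, hv0, hvf⟩ hf0
          have hfM' : f ∈ M' := by
            rw [← hc'zero]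
            exact ⟨(hmemE' f).2 ⟨hfE, hfe⟩, hf0⟩
          rw [he₀def, Sym2.mem_iff] at hv0
          rcases hv0 with h | h
          · exact hxcovM' ⟨f, hfM', h ▸ hvf⟩
          · exact hucovM' ⟨f, hfM', h ▸ hvf⟩
        intro e f heE hfE hef hshare
        dsimp only
        by_cases hee : e = e₀ <;> by_cases hfe : f = e₀
        · exact absurd (hee.trans hfe.symm) hef
        · rw [if_pos hee, if_neg hfe]
          exact fun h0 => key f hfE hfe (hee ▸ hshare) h0.symm
        · rw [if_neg hee, if_pos hfe]
          refine fun h0 => key e heE hee ?_ h0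
          obtain ⟨v, hv1, hv2⟩ := hshare
          exact ⟨v, hfe ▸ hv2, hv1⟩
        · rw [if_neg hee, if_neg hfe]
          exact hc'prop e f ((hmemE' e).2 ⟨heE, hee⟩) ((hmemE' f).2 ⟨hfE, hfe⟩) hef hshare
    · -- e₀ ∉ M
      have hMsub' : EMatch F' M := by
        constructor
        · intro f hf
          rw [hmemE' f]
          exact ⟨hM.1 hf, fun h => he₀M (h ▸ hf)⟩
        · exact fun a ha b hb hab v hva hvb => hM.2 a ha b hb hab v hva hvb
      have hxcovM : ¬ vCov M x := by
        rintro ⟨f, hf, hxf⟩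
        exact he₀M ((hxcov f hf hxf) ▸ hf)
      have hcov' : ∀ v, ¬ vCov M v → (F'.neighborSet v).ncard < D := by
        intro v hv
        by_cases hvx : v = x
        · subst hvx; rw [hnbrx]; simpa using (show 0 < D from hD1)
        by_cases hvu : v = u
        · rw [hvu]
          have h1 := hcov u (hvu ▸ hv)
          omega
        · rw [hnbr' v hvx hvu]; exact hcov v hv
      obtain ⟨c', hc'lt, hc'zero, hc'prop⟩ := ih _ hk' F' hF' rfl hdeg' M hMsub' hcov'
      set Cu : Finset ℕ := (F'.neighborSet u).toFinset.image (fun w => c' s(u, w)) with hCu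
      have hCucard : Cu.card ≤ (F'.neighborSet u).ncard := by
        calc Cu.card ≤ (F'.neighborSet u).toFinset.card := Finset.card_image_le
          _ = (F'.neighborSet u).ncard := (Set.ncard_eq_toFinset_card' _).symm
      have hcard : (insert 0 Cu).card < D := by
        by_cases hucov : vCov M u
        · obtain ⟨f, hf, huf⟩ := hucov
          obtain ⟨w₀, rfl⟩ := Sym2.mem_iff_exists.mp huf
          have hfne : s(u, w₀) ≠ e₀ := fun h => he₀M (h ▸ hf)
          have hfE' : s(u, w₀) ∈ F'.edgeSet := (hmemE' _).2 ⟨hM.1 hf, hfne⟩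
          have hw₀ : w₀ ∈ F'.neighborSet u := (SimpleGraph.mem_edgeSet F').1 hfE'
          have h0Cu : (0 : ℕ) ∈ Cu := by
            have hc0 : c' s(u, w₀) = 0 := by
              have hmem : s(u, w₀) ∈ {e | e ∈ F'.edgeSet ∧ c' e = 0} := by
                rw [hc'zero]; exact hf
              exact hmem.2
            exact Finset.mem_image.2 ⟨w₀, Set.mem_toFinset.2 hw₀, hc0⟩
          rw [Finset.insert_eq_self.2 h0Cu]
          have h1 := hdeg u
          omega
        · have h1 := hcov u hucov
          have hCi := Finset.card_insert_le 0 Cu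
          omega
      have hexists : ∃ γ, γ ∈ Finset.range D ∧ γ ∉ insert 0 Cu := by
        by_contra hcon
        push_neg at hcon
        have hsubr : Finset.range D ⊆ insert 0 Cu := fun γ hγ => hcon γ hγ
        have hcc := Finset.card_le_card hsubr
        rw [Finset.card_range] at hcc
        omega
      obtain ⟨γ, hγD, hγni⟩ := hexists
      rw [Finset.mem_range] at hγD
      have hγ0 : γ ≠ 0 := fun h => hγni (h ▸ Finset.mem_insert_self 0 Cu)
      have hγCu : γ ∉ Cu := fun h => hγni (Finset.mem_insert_of_mem h)
      refine ⟨fun f => if f = e₀ then γ else c' f, ?_, ?_, ?_⟩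
      · intro f hf
        dsimp only
        by_cases hfe : f = e₀
        · rw [if_pos hfe]; exact hγD
        · rw [if_neg hfe]; exact hc'lt f ((hmemE' f).2 ⟨hf, hfe⟩)
      · ext f
        simp only [Set.mem_setOf_eq]
        constructor
        · rintro ⟨hfE, hf0⟩
          by_cases hfe : f = e₀
          · rw [if_pos hfe] at hf0; exact absurd hf0 hγ0
          · rw [if_neg hfe] at hf0
            have hmem : f ∈ {e | e ∈ F'.edgeSet ∧ c' e = 0} := ⟨(hmemE' f).2 ⟨hfE, hfe⟩, hf0⟩
            rwa [hc'zero] at hmem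
        · intro hfM
          have hfne : f ≠ e₀ := fun h => he₀M (h ▸ hfM)
          refine ⟨hM.1 hfM, ?_⟩
          rw [if_neg hfne]
          have hmem : f ∈ {e | e ∈ F'.edgeSet ∧ c' e = 0} := by rw [hc'zero]; exact hfM
          exact hmem.2
      · have key : ∀ f, f ∈ F.edgeSet → f ≠ e₀ → (∃ v, v ∈ e₀ ∧ v ∈ f) → c' f ≠ γ := by
          rintro f hfE hfe ⟨v, hv0, hvf⟩
          rw [he₀def, Sym2.mem_iff] at hv0
          have hfE' : f ∈ F'.edgeSet := (hmemE' f).2 ⟨hfE, hfe⟩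
          rcases hv0 with h | h
          · exfalso
            obtain ⟨z, rfl⟩ := Sym2.mem_iff_exists.mp (h ▸ hvf)
            have hz : z ∈ F'.neighborSet x := (SimpleGraph.mem_edgeSet F').1 hfE'
            rw [hnbrx] at hz
            exact hz
          · obtain ⟨z, rfl⟩ := Sym2.mem_iff_exists.mp (h ▸ hvf)
            have hz : z ∈ F'.neighborSet u := (SimpleGraph.mem_edgeSet F').1 hfE'
            intro hcq
            exact hγCu (hcq ▸ Finset.mem_image.2 ⟨z, Set.mem_toFinset.2 hz, rfl⟩)
        intro e f heE hfE hef hshare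
        dsimp only
        by_cases hee : e = e₀ <;> by_cases hfe : f = e₀
        · exact absurd (hee.trans hfe.symm) hef
        · rw [if_pos hee, if_neg hfe]
          exact fun h0 => key f hfE hfe (hee ▸ hshare) h0.symm
        · rw [if_neg hee, if_pos hfe]
          refine fun h0 => key e heE hee ?_ h0
          obtain ⟨v, hv1, hv2⟩ := hshare
          exact ⟨v, hfe ▸ hv2, hv1⟩
        · rw [if_neg hee, if_neg hfe]
          exact hc'prop e f ((hmemE' e).2 ⟨heE, hee⟩) ((hmemE' f).2 ⟨hfE, hfe⟩) hef hshare


lemma walkLemma {T : SimpleGraph V} (hT : T.IsTree) {D : ℕ} (hD : 2 ≤ D)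
    (hdeg : ∀ v, (T.neighborSet v).ncard ≤ D) :
    ∀ (m : ℕ) (M : Set (Sym2 V)), EMatch T M → M.ncard = matchingNum T →
    ∀ (y x : V) (p : T.Walk y x), p.IsPath → Fintype.card V - p.length = m →
    ¬ vCov M x → (T.neighborSet x).ncard = D →
    (∀ z ∈ p.support, z ≠ x → ∃ w, s(z,w) ∈ M ∧ w ∈ p.support) →
    ∃ M', EMatch T M' ∧ M'.ncard = matchingNum T ∧
      ∀ z, (T.neighborSet z).ncard = D → (vCov M z ∨ z = x) → vCov M' z := by
  classical
  intro m
  induction m using Nat.strong_induction_on with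
  | _ m ih =>
  intro M hM hMmax y x p hp hm hxcov hxdeg hinv
  obtain ⟨z, hz⟩ := edges_at_end p hp
  have h2 : 2 ≤ (T.neighborSet x).ncard := hxdeg ▸ hD
  have hzx : ((T.neighborSet x) \ {z}).Nonempty := by
    rw [Set.nonempty_iff_ne_empty]
    intro hemp
    have hsub2 : T.neighborSet x ⊆ {z} := by
      intro a ha
      by_contra haz
      exact (Set.eq_empty_iff_forall_notMem.1 hemp a) ⟨ha, haz⟩
    have hle1 := Set.ncard_le_ncard hsub2 (Set.toFinite _)
    rw [Set.ncard_singleton] at hle1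
    omega
  obtain ⟨u, hunbr, huz⟩ := hzx
  have huz' : u ≠ z := huz
  have hadjxu : T.Adj x u := hunbr
  have hxe : s(u, x) ∉ p.edges := by
    intro hmem
    have heq := hz _ hmem (Sym2.mem_mk_right u x)
    rw [Sym2.eq_iff] at heq
    rcases heq with ⟨h1, -⟩ | ⟨h1, -⟩
    · exact hadjxu.ne h1.symm
    · exact huz' h1
  have husup : u ∉ p.support := by
    intro hus
    have hr : (p.dropUntil u hus).IsPath := hp.dropUntil hus
    have hPe : (Walk.cons hadjxu.symm Walk.nil : T.Walk u x).IsPath := by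
      simp [Walk.cons_isPath_iff, hadjxu.ne']
    have heq : p.dropUntil u hus = Walk.cons hadjxu.symm Walk.nil :=
      Subtype.mk_eq_mk.mp (hT.IsAcyclic.path_unique ⟨_, hr⟩ ⟨_, hPe⟩)
    apply hxe
    apply Walk.edges_dropUntil_subset p hus
    rw [heq]
    simp
  have hxuE : s(x, u) ∈ T.edgeSet := (SimpleGraph.mem_edgeSet T).2 hadjxu
  have hnotmem : s(x, u) ∉ M := fun h => hxcov ⟨_, h, Sym2.mem_mk_left x u⟩
  have hucov : vCov M u := by
    by_contra huncov
    have hnewM : EMatch T (insert s(x, u) M) := by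
      constructor
      · intro f hf
        rcases Set.mem_insert_iff.1 hf with rfl | hf
        · exact hxuE
        · exact hM.1 hf
      · intro a ha b hb hab v hva hvb
        rcases Set.mem_insert_iff.1 ha with hae | haM
        · rcases Set.mem_insert_iff.1 hb with hbe | hbM
          · exact hab (hae.trans hbe.symm)
          · have hva' : v ∈ s(x, u) := hae ▸ hva
            rw [Sym2.mem_iff] at hva'
            rcases hva' with h | h
            · exact hxcov ⟨b, hbM, h ▸ hvb⟩
            · exact huncov ⟨b, hbM, h ▸ hvb⟩
        · rcases Set.mem_insert_iff.1 hb with hbe | hbM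
          · have hvb' : v ∈ s(x, u) := hbe ▸ hvb
            rw [Sym2.mem_iff] at hvb'
            rcases hvb' with h | h
            · exact hxcov ⟨a, haM, h ▸ hva⟩
            · exact huncov ⟨a, haM, h ▸ hva⟩
          · exact hM.2 a haM b hbM hab v hva hvb
    have hcard := Set.ncard_insert_of_notMem hnotmem (Set.toFinite _)
    have hle := ematch_ncard_le hnewM
    rw [hMmax] at hcard
    omega
  obtain ⟨f, hfM, huf⟩ := hucov
  obtain ⟨w, rfl⟩ := Sym2.mem_iff_exists.mp huf
  have hadjuw : T.Adj u w := (SimpleGraph.mem_edgeSet T).1 (hM.1 hfM)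
  have hwu : w ≠ u := hadjuw.ne'
  have hwx : w ≠ x := fun h => hxcov ⟨_, hfM, h ▸ Sym2.mem_mk_right u w⟩
  have hwsup : w ∉ p.support := by
    intro hws
    obtain ⟨w', hw', hw's⟩ := hinv w hws hwx
    have hwu' : s(w, u) ∈ M := by rwa [Sym2.eq_swap]
    have hq : w' = u := hM.partner_unique hw' hwu'
    exact husup (hq ▸ hw's)
  set M₁ : Set (Sym2 V) := insert s(x, u) (M \ {s(u, w)}) with hM₁def
  have hM₁ : EMatch T M₁ := by
    constructor
    · intro g hg
      rcases Set.mem_insert_iff.1 hg with rfl | hg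
      · exact hxuE
      · exact hM.1 hg.1
    · intro a ha b hb hab v hva hvb
      rcases Set.mem_insert_iff.1 ha with hae | haM
      · rcases Set.mem_insert_iff.1 hb with hbe | hbM
        · exact hab (hae.trans hbe.symm)
        · have hva' : v ∈ s(x, u) := hae ▸ hva
          rw [Sym2.mem_iff] at hva'
          rcases hva' with h | h
          · exact hxcov ⟨b, hbM.1, h ▸ hvb⟩
          · obtain ⟨t, hbt⟩ := Sym2.mem_iff_exists.mp (h ▸ hvb : u ∈ b)
            have ht : t = w := hM.partner_unique (hbt ▸ hbM.1) hfM
            exact hbM.2 (Set.mem_singleton_iff.2 (by rw [hbt, ht]))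
      · rcases Set.mem_insert_iff.1 hb with hbe | hbM
        · have hvb' : v ∈ s(x, u) := hbe ▸ hvb
          rw [Sym2.mem_iff] at hvb'
          rcases hvb' with h | h
          · exact hxcov ⟨a, haM.1, h ▸ hva⟩
          · obtain ⟨t, hat⟩ := Sym2.mem_iff_exists.mp (h ▸ hva : u ∈ a)
            have ht : t = w := hM.partner_unique (hat ▸ haM.1) hfM
            exact haM.2 (Set.mem_singleton_iff.2 (by rw [hat, ht]))
        · exact hM.2 a haM.1 b hbM.1 hab v hva hvb
  have hfnm : s(x, u) ∉ M \ {s(u, w)} := fun h => hnotmem h.1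
  have hc1 : (M \ {s(u, w)}).ncard + 1 = M.ncard :=
    Set.ncard_diff_singleton_add_one hfM (Set.toFinite _)
  have hc2 : M₁.ncard = (M \ {s(u, w)}).ncard + 1 :=
    Set.ncard_insert_of_notMem hfnm (Set.toFinite _)
  have hcard₁ : M₁.ncard = M.ncard := by omega
  have hmax₁ : M₁.ncard = matchingNum T := by rw [hcard₁, hMmax]
  have hxcovM₁ : vCov M₁ x := ⟨s(x, u), Set.mem_insert _ _, Sym2.mem_mk_left x u⟩
  have hucovM₁ : vCov M₁ u := ⟨s(x, u), Set.mem_insert _ _, Sym2.mem_mk_right x u⟩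
  have hcovM₁ : ∀ a, vCov M a → a ≠ w → vCov M₁ a := by
    rintro a ⟨g, hg, hag⟩ haw
    by_cases hgf : g = s(u, w)
    · subst hgf
      rw [Sym2.mem_iff] at hag
      rcases hag with rfl | rfl
      · exact hucovM₁
      · exact absurd rfl haw
    · exact ⟨g, Set.mem_insert_of_mem _ ⟨hg, by simp [hgf]⟩, hag⟩
  have hwuncov₁ : ¬ vCov M₁ w := by
    rintro ⟨g, hg, hwg⟩
    rcases Set.mem_insert_iff.1 hg with rfl | hg
    · rw [Sym2.mem_iff] at hwg
      rcases hwg with h | h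
      · exact hwx h
      · exact hwu h
    · obtain ⟨t, rfl⟩ := Sym2.mem_iff_exists.mp hwg
      have hwu' : s(w, u) ∈ M := by rwa [Sym2.eq_swap]
      have : t = u := hM.partner_unique hg.1 hwu'
      apply hg.2
      rw [this]
      exact Set.mem_singleton_iff.2 (Sym2.eq_swap)
  set p' : T.Walk y w := (p.concat hadjxu).concat hadjuw with hp'def
  have hsup' : p'.support = p.support ++ [u, w] := by
    rw [hp'def, Walk.support_concat, Walk.support_concat]
    simp [List.concat_eq_append]
  have hp'path : p'.IsPath := by
    rw [Walk.isPath_def, hsup', List.nodup_append]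
    refine ⟨hp.support_nodup, ?_, ?_⟩
    · simp [List.nodup_cons, hwu.symm]
    · intro a ha b hamem
      simp only [List.mem_cons, List.mem_singleton, List.not_mem_nil, or_false] at hamem
      rcases hamem with rfl | rfl
      · exact fun h => husup (h ▸ ha)
      · exact fun h => hwsup (h ▸ ha)
  have hlen' : p'.length = p.length + 2 := by
    rw [hp'def, Walk.length_concat, Walk.length_concat]
  have hltV : p'.length < Fintype.card V := hp'path.length_lt
  by_cases hwD : (T.neighborSet w).ncard = D
  · -- recurse
    have hm' : Fintype.card V - p'.length < m := by omega
    have hinv' : ∀ a ∈ p'.support, a ≠ w → ∃ w', s(a, w') ∈ M₁ ∧ w' ∈ p'.support := by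
      intro a ha haw
      rw [hsup', List.mem_append] at ha
      rcases ha with ha | ha
      · by_cases hax : a = x
        · subst hax
          exact ⟨u, Set.mem_insert _ _, by rw [hsup']; simp⟩
        · obtain ⟨w', hw', hw's⟩ := hinv a ha hax
          have hne : s(a, w') ≠ s(u, w) := by
            intro hcontra
            rw [Sym2.eq_iff] at hcontra
            rcases hcontra with ⟨h1, -⟩ | ⟨h1, -⟩
            · exact husup (h1 ▸ ha)
            · exact hwsup (h1 ▸ ha)
          exact ⟨w', Set.mem_insert_of_mem _ ⟨hw', by simp [hne]⟩,
            by rw [hsup']; exact List.mem_append_left _ hw's⟩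
      · simp only [List.mem_cons, List.mem_singleton, List.not_mem_nil, or_false] at ha
        rcases ha with rfl | rfl
        · refine ⟨x, ?_, by rw [hsup']; exact List.mem_append_left _ p.end_mem_support⟩
          have : s(a, x) = s(x, a) := Sym2.eq_swap
          rw [this]
          exact Set.mem_insert _ _
        · exact absurd rfl haw
    obtain ⟨M', hM'match, hM'max, hM'cov⟩ :=
      ih _ hm' M₁ hM₁ hmax₁ y w p' hp'path rfl hwuncov₁ hwD hinv'
    refine ⟨M', hM'match, hM'max, ?_⟩
    intro a haD hac
    rcases hac with hac | rfl
    · by_cases haw : a = w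
      · exact hM'cov a haD (Or.inr haw)
      · exact hM'cov a haD (Or.inl (hcovM₁ a hac haw))
    · exact hM'cov a haD (Or.inl hxcovM₁)
  · -- finish: w does not have degree D
    refine ⟨M₁, hM₁, hmax₁, ?_⟩
    intro a haD hac
    rcases hac with hac | rfl
    · have haw : a ≠ w := fun h => hwD (h ▸ haD)
      exact hcovM₁ a hac haw
    · exact hxcovM₁


/-- a maximum matching covering all max-degree vertices exists in a tree -/
lemma goodM {T : SimpleGraph V} (hT : T.IsTree) (hn : 2 ≤ Fintype.card V) :
    ∃ M : Set (Sym2 V), EMatch T M ∧ M.ncard = matchingNum T ∧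
      ∀ v, (T.neighborSet v).ncard = maxDeg T → vCov M v := by
  classical
  have hneV : Nonempty V := Fintype.card_pos_iff.mp (by omega)
  have hdeg : ∀ v, (T.neighborSet v).ncard ≤ maxDeg T := deg_le_maxDeg T
  have hD1 : 1 ≤ maxDeg T := by
    obtain ⟨a, b, hab⟩ := Fintype.exists_pair_of_one_lt_card (α := V) (by omega)
    obtain ⟨pw⟩ := hT.isConnected.preconnected a b
    cases pw with
    | nil => exact absurd rfl hab
    | cons h q =>
      rename_i b'
      have hne : (T.neighborSet a).Nonempty := ⟨b', h⟩
      have := (Set.ncard_pos (Set.toFinite _)).2 hne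
      have := hdeg a
      omega
  by_cases hD2 : 2 ≤ maxDeg T
  · obtain ⟨M₀, hM₀, hmax₀⟩ := exists_max_ematch T
    suffices h : ∀ (k : ℕ) (M : Set (Sym2 V)), EMatch T M → M.ncard = matchingNum T →
        {v | (T.neighborSet v).ncard = maxDeg T ∧ ¬ vCov M v}.ncard = k →
        ∃ M', EMatch T M' ∧ M'.ncard = matchingNum T ∧
          ∀ v, (T.neighborSet v).ncard = maxDeg T → vCov M' v by
      exact h _ M₀ hM₀ hmax₀ rfl
    intro k
    induction k using Nat.strong_induction_on with
    | _ k ihk =>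
    intro M hM hmax hk
    rcases Nat.eq_zero_or_pos k with rfl | hkpos
    · refine ⟨M, hM, hmax, ?_⟩
      intro v hv
      by_contra hvc
      have hmem : v ∈ {v | (T.neighborSet v).ncard = maxDeg T ∧ ¬ vCov M v} := ⟨hv, hvc⟩
      rw [Set.ncard_eq_zero (Set.toFinite _)] at hk
      rw [hk] at hmem
      exact hmem
    · have hset : {v | (T.neighborSet v).ncard = maxDeg T ∧ ¬ vCov M v}.Nonempty := by
        rw [Set.nonempty_iff_ne_empty]
        intro hc
        rw [hc, Set.ncard_empty] at hk
        omega
      obtain ⟨v₀, hv₀D, hv₀un⟩ := hset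
      have hnil : (Walk.nil : T.Walk v₀ v₀).IsPath := by simp [Walk.isPath_def]
      have hinv0 : ∀ z ∈ (Walk.nil : T.Walk v₀ v₀).support, z ≠ v₀ →
          ∃ w, s(z, w) ∈ M ∧ w ∈ (Walk.nil : T.Walk v₀ v₀).support := by
        intro z hz hzx
        simp only [Walk.support_nil, List.mem_singleton] at hz
        exact absurd hz hzx
      obtain ⟨M', hM', hmax', hcov'⟩ :=
        walkLemma hT hD2 hdeg _ M hM hmax v₀ v₀ Walk.nil hnil rfl hv₀un hv₀D hinv0
      have hsub : {v | (T.neighborSet v).ncard = maxDeg T ∧ ¬ vCov M' v} ⊆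
          {v | (T.neighborSet v).ncard = maxDeg T ∧ ¬ vCov M v} \ {v₀} := by
        rintro a ⟨haD, haun⟩
        refine ⟨⟨haD, fun hc => haun (hcov' a haD (Or.inl hc))⟩, ?_⟩
        intro h
        exact haun (hcov' a haD (Or.inr (Set.mem_singleton_iff.1 h)))
      have hlt : {v | (T.neighborSet v).ncard = maxDeg T ∧ ¬ vCov M' v}.ncard < k := by
        calc {v | (T.neighborSet v).ncard = maxDeg T ∧ ¬ vCov M' v}.ncard
            ≤ ({v | (T.neighborSet v).ncard = maxDeg T ∧ ¬ vCov M v} \ {v₀}).ncard :=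
              Set.ncard_le_ncard hsub (Set.toFinite _)
          _ < {v | (T.neighborSet v).ncard = maxDeg T ∧ ¬ vCov M v}.ncard :=
              Set.ncard_diff_singleton_lt_of_mem ⟨hv₀D, hv₀un⟩ (Set.toFinite _)
          _ = k := hk
      exact ihk _ hlt M' hM' hmax' rfl
  · -- maxDeg = 1
    have hDeq : maxDeg T = 1 := by omega
    have hEM : EMatch T T.edgeSet := by
      refine ⟨subset_rfl, ?_⟩
      intro e he f hf hef v hve hvf
      obtain ⟨a, rfl⟩ := Sym2.mem_iff_exists.mp hve
      obtain ⟨b, rfl⟩ := Sym2.mem_iff_exists.mp hvf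
      have hab : a ≠ b := fun h => hef (by rw [h])
      have hpair : ({a, b} : Set V) ⊆ T.neighborSet v := by
        intro t ht
        rcases ht with rfl | ht
        · exact (SimpleGraph.mem_edgeSet T).1 he
        · rw [Set.mem_singleton_iff] at ht
          subst ht
          exact (SimpleGraph.mem_edgeSet T).1 hf
      have h2 := Set.ncard_le_ncard hpair (Set.toFinite _)
      rw [Set.ncard_pair hab] at h2
      have := hdeg v
      omega
    have hmaxx : T.edgeSet.ncard = matchingNum T := by
      refine le_antisymm (ematch_ncard_le hEM) ?_
      refine csSup_le ?_ ?_
      · refine ⟨0, ⊥, ?_, ?_⟩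
        · rintro v hv
          simp only [SimpleGraph.Subgraph.verts_bot, Set.mem_empty_iff_false] at hv
        · simp [SimpleGraph.Subgraph.edgeSet_bot]
      · rintro n ⟨N, -, rfl⟩
        exact Set.ncard_le_ncard N.edgeSet_subset (Set.toFinite _)
    refine ⟨T.edgeSet, hEM, hmaxx, ?_⟩
    intro v hv
    have hne : (T.neighborSet v).Nonempty := by
      rw [← Set.ncard_pos (Set.toFinite _)]
      omega
    obtain ⟨w, hw⟩ := hne
    exact ⟨s(v, w), (SimpleGraph.mem_edgeSet T).2 hw, Sym2.mem_mk_left _ _⟩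


lemma properWalk_of_proper_coloring {F : SimpleGraph V} {c : Sym2 V → ℕ}
    (hprop : ∀ e f, e ∈ F.edgeSet → f ∈ F.edgeSet → e ≠ f → (∃ v : V, v ∈ e ∧ v ∈ f) →
      c e ≠ c f) {u v : V} (p : F.Walk u v) (hp : p.IsPath) : ProperWalk c p := by
  induction p with
  | nil => simp [ProperWalk, List.Chain']
  | cons h q ih =>
    rename_i u' b w'
    cases q with
    | nil => simp [ProperWalk, List.Chain']
    | cons h2 r =>
      rename_i d
      have hp2 : (Walk.cons h2 r).IsPath := hp.of_cons
      have htail := ih hp2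
      have hu'd : u' ≠ d := by
        intro hud
        have : u' ∈ (Walk.cons h2 r).support := by
          rw [hud, Walk.support_cons]
          exact List.mem_cons_of_mem _ r.start_mem_support
        exact ((Walk.cons_isPath_iff h (Walk.cons h2 r)).mp hp).2 this
      have hne : s(u', b) ≠ s(b, d) := by
        intro hcontra
        rw [Sym2.eq_iff] at hcontra
        rcases hcontra with ⟨rfl, rfl⟩ | ⟨rfl, -⟩
        · exact h.ne rfl
        · exact hu'd rfl
      have hcol : c s(u', b) ≠ c s(b, d) :=
        hprop _ _ ((SimpleGraph.mem_edgeSet F).2 h) ((SimpleGraph.mem_edgeSet F).2 h2) hne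
          ⟨b, Sym2.mem_mk_right _ _, Sym2.mem_mk_left _ _⟩
      simpa only [ProperWalk, List.Chain', Walk.edges_cons, List.map_cons, List.isChain_cons_cons]
        using ⟨hcol, htail⟩

end PCAux

open PCAux in
/-- pc_opt(T) = n - 2 - α'(T) + Δ(T), stated additively to avoid truncated
natural subtraction. -/
theorem stmt11 {V : Type*} [Fintype V] (T : SimpleGraph V) (hT : T.IsTree)
    (hn : 2 ≤ Fintype.card V) :
    pcOpt T + matchingNum T + 2 = Fintype.card V + maxDeg T := by
  classical
  have hneV : Nonempty V := Fintype.card_pos_iff.mp (by omega)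
  have hdeg : ∀ v, (T.neighborSet v).ncard ≤ maxDeg T := deg_le_maxDeg T
  have hD1 : 1 ≤ maxDeg T := by
    obtain ⟨a, b, hab⟩ := Fintype.exists_pair_of_one_lt_card (α := V) (by omega)
    obtain ⟨pw⟩ := hT.isConnected.preconnected a b
    cases pw with
    | nil => exact absurd rfl hab
    | cons h q =>
      rename_i b'
      have hne : (T.neighborSet a).Nonempty := ⟨b', h⟩
      have h1 := (Set.ncard_pos (Set.toFinite _)).2 hne
      have h2 := hdeg a
      omega
  have hedge : T.edgeSet.ncard + 1 = Fintype.card V := by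
    haveI : Fintype T.edgeSet := Set.Finite.fintype (Set.toFinite _)
    have h1 := hT.card_edgeFinset
    rwa [SimpleGraph.edgeFinset, ← Set.ncard_eq_toFinset_card'] at h1
  -- lower bound
  have hlow : ∀ mm ∈ { n | ∃ c : Sym2 V → ℕ, ProperlyConnected T c ∧
      n = numRecolored T c + numNewColors T c },
      Fintype.card V + maxDeg T ≤ mm + matchingNum T + 2 := by
    rintro mm ⟨c, hpc, rfl⟩
    set M₀ := {e | e ∈ T.edgeSet ∧ c e = 0} with hM₀
    have hM₀match : EMatch T M₀ := by
      refine ⟨fun e he => he.1, ?_⟩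
      intro e he f hf hef v hve hvf
      obtain ⟨a, rfl⟩ := Sym2.mem_iff_exists.mp hve
      obtain ⟨b, rfl⟩ := Sym2.mem_iff_exists.mp hvf
      have hab : a ≠ b := fun h => hef (by rw [h])
      have hadj1 : T.Adj v a := (SimpleGraph.mem_edgeSet T).1 he.1
      have hadj2 : T.Adj v b := (SimpleGraph.mem_edgeSet T).1 hf.1
      refine tree_adj_colors_ne hT hpc hadj1.symm hadj2 hab ?_
      rw [show s(a, v) = s(v, a) from Sym2.eq_swap, he.2, hf.2]
    have hM₀le : M₀.ncard ≤ matchingNum T := ematch_ncard_le hM₀match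
    have hsplit : numRecolored T c + M₀.ncard = T.edgeSet.ncard := by
      rw [numRecolored]
      have hEq : {e | e ∈ T.edgeSet ∧ c e ≠ 0} = T.edgeSet \ M₀ := by
        ext e
        simp only [Set.mem_setOf_eq, Set.mem_diff, hM₀]
        tauto
      rw [hEq]
      exact Set.ncard_diff_add_ncard_of_subset (fun e he => he.1) (Set.toFinite _)
    obtain ⟨vD, hvD⟩ := exists_maxDeg_vertex T
    have hq : maxDeg T ≤ numNewColors T c + 1 := by
      set img := (fun w => c s(vD, w)) '' (T.neighborSet vD) with himg
      have hinj : Set.InjOn (fun w => c s(vD, w)) (T.neighborSet vD) := by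
        intro a ha b hb hcc
        by_contra hab
        refine tree_adj_colors_ne hT hpc (Adj.symm ha) hb hab ?_
        rw [show s(a, vD) = s(vD, a) from Sym2.eq_swap]
        exact hcc
      have himgcard : img.ncard = maxDeg T := by
        rw [himg, Set.ncard_image_of_injOn hinj, hvD]
      have hsubset : img \ {0} ⊆ c '' {e | e ∈ T.edgeSet ∧ c e ≠ 0} := by
        rintro γ ⟨⟨w, hw, rfl⟩, hγ0⟩
        rw [Set.mem_singleton_iff] at hγ0
        exact ⟨s(vD, w), ⟨(SimpleGraph.mem_edgeSet T).2 hw, hγ0⟩, rfl⟩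
      have h1 : img.ncard ≤ (img \ {0}).ncard + 1 := by
        calc img.ncard ≤ ((img \ {0}) ∪ {0}).ncard :=
              Set.ncard_le_ncard (by intro a ha; by_cases h : a = 0 <;> simp [h, ha])
                (Set.toFinite _)
          _ ≤ (img \ {0}).ncard + ({0} : Set ℕ).ncard := Set.ncard_union_le _ _
          _ = (img \ {0}).ncard + 1 := by rw [Set.ncard_singleton]
      have h2 : (img \ {0}).ncard ≤ numNewColors T c :=
        Set.ncard_le_ncard hsubset (Set.toFinite _)
      rw [show numNewColors T c = (c '' {e | e ∈ T.edgeSet ∧ c e ≠ 0}).ncard from rfl] at h2 ⊢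
      omega
    omega
  -- upper bound witness
  obtain ⟨M, hM, hMmax, hMcov⟩ := goodM hT hn
  have hcovcond : ∀ v, ¬ vCov M v → (T.neighborSet v).ncard < maxDeg T := by
    intro v hv
    have h1 := hdeg v
    have h2 : (T.neighborSet v).ncard ≠ maxDeg T := fun h => hv (hMcov v h)
    omega
  obtain ⟨c, hclt, hczero, hcprop⟩ := colorQ (maxDeg T) (T.edgeSet.ncard) T hT.IsAcyclic rfl
    hdeg M hM hcovcond
  have hpc : ProperlyConnected T c := by
    intro a b hab
    obtain ⟨pw⟩ := hT.isConnected.preconnected a b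
    exact ⟨pw.toPath.val, pw.toPath.property,
      properWalk_of_proper_coloring hcprop _ pw.toPath.property⟩
  have hpval : numRecolored T c + M.ncard = T.edgeSet.ncard := by
    rw [numRecolored]
    have hEq : {e | e ∈ T.edgeSet ∧ c e ≠ 0} = T.edgeSet \ M := by
      ext e
      simp only [Set.mem_setOf_eq, Set.mem_diff]
      constructor
      · rintro ⟨he, h0⟩
        exact ⟨he, fun hm => h0 (Set.ext_iff.mp hczero e |>.2 hm).2⟩
      · rintro ⟨he, hm⟩
        refine ⟨he, fun h0 => hm ?_⟩
        exact (Set.ext_iff.mp hczero e).1 ⟨he, h0⟩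
    rw [hEq]
    exact Set.ncard_diff_add_ncard_of_subset hM.1 (Set.toFinite _)
  have hqval : numNewColors T c + 1 ≤ maxDeg T := by
    have hsub : c '' {e | e ∈ T.edgeSet ∧ c e ≠ 0} ⊆ ↑(Finset.Ioo 0 (maxDeg T)) := by
      rintro γ ⟨e, ⟨he, h0⟩, rfl⟩
      simp only [Finset.coe_Ioo, Set.mem_Ioo]
      exact ⟨Nat.pos_of_ne_zero h0, hclt e he⟩
    have h1 : numNewColors T c ≤ (Finset.Ioo 0 (maxDeg T)).card := by
      rw [numNewColors, ← Set.ncard_coe_finset]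
      exact Set.ncard_le_ncard hsub (Set.toFinite _)
    rw [Nat.card_Ioo] at h1
    omega
  have hmem : numRecolored T c + numNewColors T c ∈ { n | ∃ c : Sym2 V → ℕ,
      ProperlyConnected T c ∧ n = numRecolored T c + numNewColors T c } := ⟨c, hpc, rfl⟩
  have hup : pcOpt T ≤ numRecolored T c + numNewColors T c := Nat.sInf_le hmem
  have hlow' := hlow _ (Nat.sInf_mem (⟨_, hmem⟩ : { n | ∃ c : Sym2 V → ℕ,
      ProperlyConnected T c ∧ n = numRecolored T c + numNewColors T c }.Nonempty))
  have hMle : M.ncard = matchingNum T := hMmax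
  refine le_antisymm ?_ ?_
  · -- pcOpt + ν + 2 ≤ n + D
    have := hup
    omega
  · exact hlow'
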